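/- Let T be an essentially bounded random variable on a probability space and let τ ∈ ℝ satisfy essInf T < τ ≤ E[T]. Then the set {γ ∈ (0,1] : sup_{α∈ℝ} (αγ − E[max(α − T, 0)]) ≥ τγ} has a minimum γ*, and γ* = inf_{c ≥ 0} E[max(0, c(τ − T) + 1)]. -/

import Mathlib

open MeasureTheory

set_option maxHeartbeats 2000000 in
/-- Lemma 1 of the paper. For an essentially bounded random variable `T`
and `τ` with `essInf T < τ ≤ E[T]`, the set of `γ ∈ (0,1]` such that
`sup_α (αγ - E[(α - T)₊]) ≥ τγ` has a least element `γ*`, and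
`γ* = inf_{c ≥ 0} E[max 0 (c(τ - T) + 1)]`. -/
theorem stmt_0 {Ω : Type*} [MeasureSpace Ω] [IsProbabilityMeasure (volume : Measure Ω)]
    (T : Ω → ℝ) (hTmeas : Measurable T) (hTbdd : MemLp T ⊤ volume) (τ : ℝ)
    (hτ1 : essInf T volume < τ) (hτ2 : τ ≤ ∫ ω, T ω) :
    ∃ γstar : ℝ,
      IsLeast {γ : ℝ | γ ∈ Set.Ioc (0 : ℝ) 1 ∧
          τ * γ ≤ ⨆ α : ℝ, (α * γ - ∫ ω, max (α - T ω) 0)} γstar ∧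
      γstar = ⨅ c : Set.Ici (0 : ℝ), ∫ ω, max 0 ((c : ℝ) * (τ - T ω) + 1) := by
  have hTint : Integrable T volume := hTbdd.integrable le_top
  obtain ⟨M, hM⟩ : ∃ M : ℝ, ∀ᵐ ω, T ω ≤ M := by
    refine ⟨(eLpNormEssSup T volume).toReal, ?_⟩
    have h2 : eLpNormEssSup T volume ≠ ⊤ := by
      have h3 := hTbdd.2
      rw [eLpNorm_exponent_top] at h3
      exact h3.ne
    filter_upwards [enorm_ae_le_eLpNormEssSup T volume] with ω hω
    have : ‖T ω‖ ≤ (eLpNormEssSup T volume).toReal := by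
      have := ENNReal.toReal_mono h2 hω
      simpa using this
    exact (le_abs_self _).trans (by simpa [Real.norm_eq_abs] using this)
  have hcob : Filter.IsCoboundedUnder (· ≥ ·) (ae volume) T :=
    Filter.IsBoundedUnder.isCoboundedUnder_ge ⟨M, by simpa [Filter.eventually_map] using hM⟩
  -- integrability facts
  have int_sub : ∀ α : ℝ, Integrable (fun ω => α - T ω) volume := fun α =>
    (integrable_const α).sub hTint
  have int_g : ∀ α : ℝ, Integrable (fun ω => max (α - T ω) 0) volume := fun α =>
    (int_sub α).pos_part
  have int_lin : ∀ c : ℝ, Integrable (fun ω => c * (τ - T ω) + 1) volume := fun c =>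
    (((int_sub τ).const_mul c).add (integrable_const 1))
  have int_lin' : ∀ c : ℝ, Integrable (fun ω => c * (τ - T ω)) volume := fun c =>
    ((int_sub τ).const_mul c)
  have int_φ : ∀ c : ℝ, Integrable (fun ω => max 0 (c * (τ - T ω) + 1)) volume := by
    intro c
    have h := (int_lin c).pos_part
    simpa [max_comm] using h
  set φ : ℝ → ℝ := fun c => ∫ ω, max 0 (c * (τ - T ω) + 1) with hφdef
  set γstar : ℝ := ⨅ c : Set.Ici (0 : ℝ), φ c with hγdef
  have φnonneg : ∀ c : ℝ, 0 ≤ φ c := fun c =>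
    integral_nonneg (fun ω => le_max_left _ _)
  have hbdd_below : BddBelow (Set.range fun c : Set.Ici (0 : ℝ) => φ c) := by
    refine ⟨0, ?_⟩
    rintro x ⟨c, rfl⟩
    exact φnonneg c
  have hγle : ∀ c : ℝ, 0 ≤ c → γstar ≤ φ c := fun c hc =>
    ciInf_le hbdd_below (⟨c, hc⟩ : Set.Ici (0 : ℝ))
  have φ0 : φ 0 = 1 := by
    simp [hφdef]
  have hγ1 : γstar ≤ 1 := (hγle 0 le_rfl).trans φ0.le
  -- positivity of measures below levels above essInf
  have key_meas : ∀ a : ℝ, essInf T volume < a → 0 < volume {ω | T ω < a} := by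
    intro a ha
    by_contra h
    push_neg at h
    have h0 : volume {ω | T ω < a} = 0 := le_antisymm h (by positivity)
    have hae : ∀ᵐ ω, a ≤ T ω := by
      rw [ae_iff]
      simpa [not_le] using h0
    exact absurd (Filter.le_liminf_of_le hcob hae) (not_le.2 ha)
  -- γstar > 0
  have hγpos : 0 < γstar := by
    have hspos := key_meas τ hτ1
    have hsmeas : MeasurableSet {ω | T ω < τ} := measurableSet_lt hTmeas measurable_const
    have hεpos : 0 < (volume {ω | T ω < τ}).toReal :=
      ENNReal.toReal_pos hspos.ne' (measure_ne_top _ _)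
    refine lt_of_lt_of_le hεpos (le_ciInf ?_)
    rintro ⟨c, hc⟩
    have hc' : (0 : ℝ) ≤ c := hc
    have hind : ∫ ω, Set.indicator {ω | T ω < τ} (fun _ => (1 : ℝ)) ω
        = (volume {ω | T ω < τ}).toReal := by
      rw [integral_indicator_const (1 : ℝ) hsmeas, smul_eq_mul, mul_one]
      rfl
    rw [← hind]
    refine integral_mono ((integrable_const (1 : ℝ)).indicator hsmeas) (int_φ c) ?_
    intro ω
    by_cases hω : ω ∈ {ω | T ω < τ}
    · have hlt : T ω < τ := hω
      have h1 : (0 : ℝ) ≤ c * (τ - T ω) := mul_nonneg hc' (by linarith)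
      simp only [Set.indicator_of_mem hω]
      have : (1 : ℝ) ≤ c * (τ - T ω) + 1 := by linarith
      exact this.trans (le_max_right _ _)
    · simp only [Set.indicator_of_notMem hω]
      exact le_max_left _ _
  have hTconst : ∫ ω, (τ - T ω) = τ - ∫ ω, T ω := by
    rw [integral_sub (integrable_const τ) hTint, integral_const, probReal_univ, one_smul]
  -- linear lower bound for φ
  have hint_const : ∀ c : ℝ, ∫ ω, (c * (τ - T ω) + 1) = c * (τ - ∫ ω, T ω) + 1 := by
    intro c
    rw [integral_add (int_lin' c) (integrable_const 1), integral_const_mul, hTconst,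
      integral_const, probReal_univ, one_smul]
  have hφ_lin : ∀ c : ℝ, c * (τ - ∫ ω, T ω) + 1 ≤ φ c := by
    intro c
    rw [← hint_const c]
    exact integral_mono (int_lin c) (int_φ c) (fun ω => le_max_right _ _)
  -- key change-of-variables identity
  have hkey : ∀ α : ℝ, τ < α → φ ((α - τ)⁻¹) = (α - τ)⁻¹ * ∫ ω, max (α - T ω) 0 := by
    intro α hα
    have hpos : 0 < α - τ := sub_pos.2 hα
    have hptwise : ∀ ω, max 0 ((α - τ)⁻¹ * (τ - T ω) + 1)
        = (α - τ)⁻¹ * max (α - T ω) 0 := by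
      intro ω
      have harg : (α - τ)⁻¹ * (τ - T ω) + 1 = (α - τ)⁻¹ * (α - T ω) := by
        field_simp
        ring
      rw [harg, mul_max_of_nonneg _ _ (inv_nonneg.2 hpos.le), mul_zero, max_comm]
    calc φ ((α - τ)⁻¹) = ∫ ω, (α - τ)⁻¹ * max (α - T ω) 0 := by
          simp only [hφdef]; exact integral_congr_ae (Filter.Eventually.of_forall hptwise)
      _ = (α - τ)⁻¹ * ∫ ω, max (α - T ω) 0 := integral_const_mul _ _
  -- lower bound used for boundedness of the sup
  have h_g_lb : ∀ α : ℝ, α - ∫ ω, T ω ≤ ∫ ω, max (α - T ω) 0 := by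
    intro α
    have h := integral_mono (int_sub α) (int_g α) (fun ω => le_max_left (α - T ω) 0)
    rwa [integral_sub (integrable_const α) hTint, integral_const, probReal_univ, one_smul] at h
  have hbddA : ∀ γ : ℝ, 0 ≤ γ → γ ≤ 1 →
      BddAbove (Set.range fun α : ℝ => α * γ - ∫ ω, max (α - T ω) 0) := by
    intro γ hγ0 hγ1'
    refine ⟨max 0 (∫ ω, T ω), ?_⟩
    rintro x ⟨α, rfl⟩
    rcases le_or_gt 0 α with hα | hα
    · have h1 : α * γ ≤ α := by nlinarith
      have h2 := h_g_lb α
      have : α * γ - ∫ ω, max (α - T ω) 0 ≤ ∫ ω, T ω := by linarith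
      exact this.trans (le_max_right _ _)
    · have h1 : α * γ ≤ 0 := mul_nonpos_of_nonpos_of_nonneg hα.le hγ0
      have h2 : 0 ≤ ∫ ω, max (α - T ω) 0 := integral_nonneg fun ω => le_max_right _ _
      have : α * γ - ∫ ω, max (α - T ω) 0 ≤ 0 := by linarith
      exact this.trans (le_max_left _ _)
  -- quantities for the lower-bound direction
  set τ' : ℝ := (essInf T volume + τ) / 2 with hτ'def
  have hτ'lt : τ' < τ := by
    have := hτ1
    simp only [hτ'def]
    linarith
  have hessτ' : essInf T volume < τ' := by
    simp only [hτ'def]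
    linarith
  set η : ℝ := ∫ ω, max (τ' - T ω) 0 with hηdef
  have hηpos : 0 < η := by
    rw [hηdef]
    refine (integral_pos_iff_support_of_nonneg
      (f := fun ω => max (τ' - T ω) 0) (fun ω => le_max_right _ _) (int_g τ')).2 ?_
    refine lt_of_lt_of_le (key_meas τ' hessτ') (measure_mono ?_)
    intro ω hω
    have h1 : 0 < τ' - T ω := sub_pos.2 hω
    simp only [Function.mem_support]
    intro hcon
    rw [max_eq_left h1.le] at hcon
    linarith
  have hη_mono : ∀ α : ℝ, τ' ≤ α → η ≤ ∫ ω, max (α - T ω) 0 := by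
    intro α hα
    exact integral_mono (int_g τ') (int_g α)
      (fun ω => max_le_max (by linarith) le_rfl)
  -- membership: τ * γstar ≤ sup
  have hmem : τ * γstar ≤ ⨆ α : ℝ, (α * γstar - ∫ ω, max (α - T ω) 0) := by
    rcases eq_or_lt_of_le hγ1 with hγeq | hγlt1
    · -- γstar = 1 : take α = essential bound of T
      have hMval : ∫ ω, max (M - T ω) 0 = M - ∫ ω, T ω := by
        have hcongr : (fun ω => max (M - T ω) 0) =ᵐ[volume] fun ω => M - T ω := by
          filter_upwards [hM] with ω hω
          exact max_eq_left (by linarith)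
        rw [integral_congr_ae hcongr, integral_sub (integrable_const M) hTint,
          integral_const, probReal_univ, one_smul]
      have hMle : τ * γstar ≤ M * γstar - ∫ ω, max (M - T ω) 0 := by
        rw [hMval, hγeq]
        linarith
      exact hMle.trans (le_ciSup (hbddA γstar hγpos.le hγ1) M)
    · -- γstar < 1
      have hKpos : 0 < (∫ ω, T ω) - τ := by
        by_contra hK
        push_neg at hK
        have h1 : (1 : ℝ) ≤ γstar := by
          refine le_ciInf ?_
          rintro ⟨c, hc⟩
          have hc' : (0 : ℝ) ≤ c := hc
          refine le_trans ?_ (hφ_lin c)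
          nlinarith [mul_nonneg hc' (show (0:ℝ) ≤ τ - ∫ ω, T ω by linarith)]
        linarith
      set K : ℝ := (∫ ω, T ω) - τ with hKdef
      refine le_of_forall_pos_le_add ?_
      intro ε hε
      set β : ℝ := (1 - γstar) / 2 with hβdef
      have hβpos : 0 < β := by simp only [hβdef]; linarith
      set ε' : ℝ := min β (ε * β / K) with hε'def
      have hε'pos : 0 < ε' := lt_min hβpos (by positivity)
      obtain ⟨⟨c, hc0⟩, hcφ⟩ := exists_lt_of_ciInf_lt
        (show (⨅ c : Set.Ici (0 : ℝ), φ c) < γstar + ε' by rw [← hγdef]; linarith)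
      have hc0' : (0 : ℝ) ≤ c := hc0
      have hcφ' : φ c < γstar + ε' := hcφ
      have hclb : β / K < c := by
        have h1 := hφ_lin c
        have h2 : ε' ≤ β := min_le_left _ _
        have h3 : c * (τ - ∫ ω, T ω) = -(c * K) := by rw [hKdef]; ring
        rw [div_lt_iff₀ hKpos]
        nlinarith
      have hcpos : 0 < c := lt_trans (by positivity) hclb
      set α : ℝ := τ + c⁻¹ with hαdef
      have hατ : τ < α := by
        have h1 : 0 < c⁻¹ := inv_pos.2 hcpos
        simp only [hαdef]
        linarith
      have hginv : (α - τ)⁻¹ = c := by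
        rw [hαdef]
        simp
      have hkeyc := hkey α hατ
      rw [hginv] at hkeyc
      have hgval : ∫ ω, max (α - T ω) 0 = c⁻¹ * φ c := by
        rw [hkeyc, ← mul_assoc, inv_mul_cancel₀ hcpos.ne', one_mul]
      have hc' : c⁻¹ < K / β := by
        have h1 : c⁻¹ < (β / K)⁻¹ := inv_strictAnti₀ (by positivity) hclb
        rwa [inv_div] at h1
      have hεK : ε' ≤ ε * β / K := min_le_right _ _
      have e1 : c⁻¹ * (-ε') ≤ c⁻¹ * (γstar - φ c) :=
        mul_le_mul_of_nonneg_left (by linarith) (inv_nonneg.2 hc0')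
      have e2 : c⁻¹ * ε' ≤ (K / β) * ε' := mul_le_mul_of_nonneg_right hc'.le hε'pos.le
      have e3 : (K / β) * ε' ≤ (K / β) * (ε * β / K) :=
        mul_le_mul_of_nonneg_left hεK (by positivity)
      have e4 : (K / β) * (ε * β / K) = ε := by
        field_simp
      have hαbound : τ * γstar - ε ≤ α * γstar - ∫ ω, max (α - T ω) 0 := by
        rw [hgval, hαdef]
        nlinarith [e1, e2, e3]
      have hsup := le_ciSup (hbddA γstar hγpos.le hγ1) α
      linarith
  -- lower bound direction
  have hlb : ∀ γ ∈ {γ : ℝ | γ ∈ Set.Ioc (0 : ℝ) 1 ∧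
      τ * γ ≤ ⨆ α : ℝ, (α * γ - ∫ ω, max (α - T ω) 0)}, γstar ≤ γ := by
    rintro γ ⟨⟨hγ0, hγle1⟩, hsup⟩
    by_contra hlt
    push_neg at hlt
    set δ : ℝ := γstar - γ with hδdef
    have hδpos : 0 < δ := by simp only [hδdef]; linarith
    set m : ℝ := min ((τ - τ') * γ) (min (η / 2) (δ * η / 2)) with hmdef
    have hmpos : 0 < m :=
      lt_min (mul_pos (sub_pos.2 hτ'lt) hγ0) (lt_min (by linarith) (by positivity))
    have hub : ∀ α : ℝ, α * γ - ∫ ω, max (α - T ω) 0 ≤ τ * γ - m := by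
      intro α
      rcases le_or_gt α τ' with h1 | h1
      · have hg0 : 0 ≤ ∫ ω, max (α - T ω) 0 := integral_nonneg fun ω => le_max_right _ _
        have h2 : α * γ ≤ τ' * γ := mul_le_mul_of_nonneg_right h1 hγ0.le
        have hm1 : m ≤ (τ - τ') * γ := min_le_left _ _
        nlinarith
      · rcases le_or_gt α (τ + η / 2) with h2 | h2
        · have hg := hη_mono α h1.le
          have hm2 : m ≤ η / 2 := (min_le_right _ _).trans (min_le_left _ _)
          nlinarith [mul_le_mul_of_nonneg_right h2 hγ0.le,
            mul_le_mul_of_nonneg_left hγle1 (show (0:ℝ) ≤ η / 2 by linarith)]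
        · have hγφ := hγle (α - τ)⁻¹ (inv_nonneg.2 (by linarith))
          rw [hkey α (by linarith)] at hγφ
          have hαsub : 0 < α - τ := by linarith
          have hg : (α - τ) * γstar ≤ ∫ ω, max (α - T ω) 0 := by
            have h3 := mul_le_mul_of_nonneg_left hγφ hαsub.le
            rwa [← mul_assoc, mul_inv_cancel₀ hαsub.ne', one_mul] at h3
          have hm3 : m ≤ δ * η / 2 := (min_le_right _ _).trans (min_le_right _ _)
          nlinarith [mul_le_mul_of_nonneg_left (show η / 2 ≤ α - τ by linarith) hδpos.le]
    have hfin : (⨆ α : ℝ, (α * γ - ∫ ω, max (α - T ω) 0)) ≤ τ * γ - m := ciSup_le hub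
    linarith
  exact ⟨γstar, ⟨⟨⟨hγpos, hγ1⟩, hmem⟩, hlb⟩, rfl⟩
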